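/- Implicit Harten–Yee TVD lemma (the criterion underlying the implicit cases of the paper's Theorem 1): Let θ ∈ [0,1], let u, v : ℤ → ℝ be grid functions with TV(v) < ∞, and let C, D, Ĉ, D̂ assign real numbers to each cell interface j+1/2 with Ĉ and D̂ bounded. Suppose that for all j ∈ ℤ, v_j − θ[Ĉ_{j+1/2}·Δ_{j+1/2}v − D̂_{j−1/2}·Δ_{j−1/2}v] = u_j + (1−θ)[C_{j+1/2}·Δ_{j+1/2}u − D_{j−1/2}·Δ_{j−1/2}u], and that for all j: C_{j+1/2} ≥ 0, D_{j+1/2} ≥ 0, (1−θ)(C_{j+1/2} + D_{j+1/2}) ≤ 1, Ĉ_{j+1/2} ≥ 0, and D̂_{j+1/2} ≥ 0. Then TV(v) ≤ TV(u). -/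

import Mathlib

/-- Total variation of a grid function `u : ℤ → ℝ`, a value in `[0, ∞]`. -/
noncomputable def TV (u : ℤ → ℝ) : ENNReal :=
  ∑' j : ℤ, ENNReal.ofReal |u (j + 1) - u j|

/-- Implicit Harten–Yee TVD lemma: let `θ ∈ [0,1]`, `TV(v) < ∞`, `Ĉ`, `D̂` bounded, and
suppose `v_j − θ[Ĉ_{j+1/2}·Δ_{j+1/2}v − D̂_{j−1/2}·Δ_{j−1/2}v]
       = u_j + (1−θ)[C_{j+1/2}·Δ_{j+1/2}u − D_{j−1/2}·Δ_{j−1/2}u]` for all `j`,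
with `C ≥ 0`, `D ≥ 0`, `(1−θ)(C + D) ≤ 1`, `Ĉ ≥ 0`, `D̂ ≥ 0` at every interface.
Then `TV(v) ≤ TV(u)`.  Interfaces `j+1/2` are indexed by `j`. -/
theorem harten_yee_implicit_tvd (θ : ℝ) (hθ0 : 0 ≤ θ) (hθ1 : θ ≤ 1)
    (u v : ℤ → ℝ) (hv : TV v < ⊤)
    (C D Chat Dhat : ℤ → ℝ)
    (hChat_bdd : ∃ M : ℝ, ∀ j : ℤ, |Chat j| ≤ M)
    (hDhat_bdd : ∃ M : ℝ, ∀ j : ℤ, |Dhat j| ≤ M)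
    (hscheme : ∀ j : ℤ,
      v j - θ * (Chat j * (v (j + 1) - v j) - Dhat (j - 1) * (v j - v (j - 1)))
        = u j + (1 - θ) * (C j * (u (j + 1) - u j) - D (j - 1) * (u j - u (j - 1))))
    (hC : ∀ j : ℤ, 0 ≤ C j) (hD : ∀ j : ℤ, 0 ≤ D j)
    (hCD : ∀ j : ℤ, (1 - θ) * (C j + D j) ≤ 1)
    (hChat : ∀ j : ℤ, 0 ≤ Chat j) (hDhat : ∀ j : ℤ, 0 ≤ Dhat j) :
    TV v ≤ TV u := by
  by_cases hu : TV u = ⊤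
  · simp [hu]
  set a : ℤ → ℝ := fun j => |u (j + 1) - u j| with ha_def
  set b : ℤ → ℝ := fun j => |v (j + 1) - v j| with hb_def
  have ha0 : ∀ j, 0 ≤ a j := fun j => abs_nonneg _
  have hb0 : ∀ j, 0 ≤ b j := fun j => abs_nonneg _
  have hsa : Summable a := by
    have h := ENNReal.summable_toReal (f := fun j : ℤ => ENNReal.ofReal |u (j + 1) - u j|) hu
    simpa [ENNReal.toReal_ofReal (abs_nonneg _)] using h
  have hsb : Summable b := by
    have h := ENNReal.summable_toReal (f := fun j : ℤ => ENNReal.ofReal |v (j + 1) - v j|) hv.ne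
    simpa [ENNReal.toReal_ofReal (abs_nonneg _)] using h
  obtain ⟨M1, hM1⟩ := hChat_bdd
  obtain ⟨M2, hM2⟩ := hDhat_bdd
  -- summability of the weighted sums
  have hsCb : Summable (fun j => θ * Chat j * b j) := by
    apply Summable.of_nonneg_of_le
      (fun j => mul_nonneg (mul_nonneg hθ0 (hChat j)) (hb0 j))
      (fun j => ?_) ((hsb.mul_left M1).mul_left θ)
    have h1 : Chat j ≤ M1 := (le_abs_self _).trans (hM1 j)
    calc θ * Chat j * b j ≤ θ * M1 * b j := by
          apply mul_le_mul_of_nonneg_right _ (hb0 j)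
          exact mul_le_mul_of_nonneg_left h1 hθ0
      _ = θ * (M1 * b j) := by ring
  have hsDb : Summable (fun j => θ * Dhat j * b j) := by
    apply Summable.of_nonneg_of_le
      (fun j => mul_nonneg (mul_nonneg hθ0 (hDhat j)) (hb0 j))
      (fun j => ?_) ((hsb.mul_left M2).mul_left θ)
    have h1 : Dhat j ≤ M2 := (le_abs_self _).trans (hM2 j)
    calc θ * Dhat j * b j ≤ θ * M2 * b j := by
          apply mul_le_mul_of_nonneg_right _ (hb0 j)
          exact mul_le_mul_of_nonneg_left h1 hθ0
      _ = θ * (M2 * b j) := by ring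
  have hcoefC : ∀ j, (1 - θ) * C j ≤ 1 := fun j =>
    le_trans (by nlinarith [hD j, hC j]) (hCD j)
  have hcoefD : ∀ j, (1 - θ) * D j ≤ 1 := fun j =>
    le_trans (by nlinarith [hD j, hC j]) (hCD j)
  have hθ1' : 0 ≤ 1 - θ := by linarith
  have hsCa : Summable (fun j => (1 - θ) * C j * a j) := by
    apply Summable.of_nonneg_of_le
      (fun j => mul_nonneg (mul_nonneg hθ1' (hC j)) (ha0 j)) (fun j => ?_) hsa
    calc (1 - θ) * C j * a j ≤ 1 * a j :=
          mul_le_mul_of_nonneg_right (hcoefC j) (ha0 j)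
      _ = a j := one_mul _
  have hsDa : Summable (fun j => (1 - θ) * D j * a j) := by
    apply Summable.of_nonneg_of_le
      (fun j => mul_nonneg (mul_nonneg hθ1' (hD j)) (ha0 j)) (fun j => ?_) hsa
    calc (1 - θ) * D j * a j ≤ 1 * a j :=
          mul_le_mul_of_nonneg_right (hcoefD j) (ha0 j)
      _ = a j := one_mul _
  have hsCDa : Summable (fun j => (1 - θ) * (C j + D j) * a j) :=
    (hsCa.add hsDa).congr (fun j => by ring)
  -- shifted versions
  have hsCb' : Summable (fun j => θ * Chat (j + 1) * b (j + 1)) := by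
    simpa [Function.comp_def] using (Equiv.addRight (1 : ℤ)).summable_iff.mpr hsCb
  have hsDb' : Summable (fun j => θ * Dhat (j - 1) * b (j - 1)) := by
    simpa [Function.comp_def, Equiv.subRight_apply] using (Equiv.subRight (1 : ℤ)).summable_iff.mpr hsDb
  have hsCa' : Summable (fun j => (1 - θ) * C (j + 1) * a (j + 1)) := by
    simpa [Function.comp_def] using (Equiv.addRight (1 : ℤ)).summable_iff.mpr hsCa
  have hsDa' : Summable (fun j => (1 - θ) * D (j - 1) * a (j - 1)) := by
    simpa [Function.comp_def, Equiv.subRight_apply] using (Equiv.subRight (1 : ℤ)).summable_iff.mpr hsDa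
  -- the key pointwise inequality
  have key : ∀ j : ℤ,
      b j + θ * Chat j * b j + θ * Dhat j * b j + (1 - θ) * (C j + D j) * a j
        ≤ θ * Chat (j + 1) * b (j + 1) + θ * Dhat (j - 1) * b (j - 1)
          + a j + (1 - θ) * C (j + 1) * a (j + 1) + (1 - θ) * D (j - 1) * a (j - 1) := by
    intro j
    have h1 := hscheme (j + 1)
    have h2 := hscheme j
    simp only [add_sub_cancel_right] at h1
    have hid : (1 + θ * (Chat j + Dhat j)) * (v (j + 1) - v j)
        = θ * Chat (j + 1) * (v (j + 1 + 1) - v (j + 1))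
          + θ * Dhat (j - 1) * (v j - v (j - 1))
          + (1 - (1 - θ) * (C j + D j)) * (u (j + 1) - u j)
          + (1 - θ) * C (j + 1) * (u (j + 1 + 1) - u (j + 1))
          + (1 - θ) * D (j - 1) * (u j - u (j - 1)) := by linarith
    have hb_eq : a j = |u (j + 1) - u j| := rfl
    have c0 : 0 ≤ 1 + θ * (Chat j + Dhat j) := by
      have := mul_nonneg hθ0 (add_nonneg (hChat j) (hDhat j)); linarith
    have c1 : 0 ≤ θ * Chat (j + 1) := mul_nonneg hθ0 (hChat _)
    have c2 : 0 ≤ θ * Dhat (j - 1) := mul_nonneg hθ0 (hDhat _)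
    have c3 : 0 ≤ 1 - (1 - θ) * (C j + D j) := by linarith [hCD j]
    have c4 : 0 ≤ (1 - θ) * C (j + 1) := mul_nonneg hθ1' (hC _)
    have c5 : 0 ≤ (1 - θ) * D (j - 1) := mul_nonneg hθ1' (hD _)
    have habs : (1 + θ * (Chat j + Dhat j)) * b j
        ≤ θ * Chat (j + 1) * b (j + 1) + θ * Dhat (j - 1) * |v j - v (j - 1)|
          + (1 - (1 - θ) * (C j + D j)) * a j
          + (1 - θ) * C (j + 1) * a (j + 1)
          + (1 - θ) * D (j - 1) * |u j - u (j - 1)| := by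
      have : (1 + θ * (Chat j + Dhat j)) * b j
          = |(1 + θ * (Chat j + Dhat j)) * (v (j + 1) - v j)| := by
        rw [abs_mul, abs_of_nonneg c0]
      rw [this, hid]
      calc |θ * Chat (j + 1) * (v (j + 1 + 1) - v (j + 1))
            + θ * Dhat (j - 1) * (v j - v (j - 1))
            + (1 - (1 - θ) * (C j + D j)) * (u (j + 1) - u j)
            + (1 - θ) * C (j + 1) * (u (j + 1 + 1) - u (j + 1))
            + (1 - θ) * D (j - 1) * (u j - u (j - 1))|
          ≤ |θ * Chat (j + 1) * (v (j + 1 + 1) - v (j + 1))|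
            + |θ * Dhat (j - 1) * (v j - v (j - 1))|
            + |(1 - (1 - θ) * (C j + D j)) * (u (j + 1) - u j)|
            + |(1 - θ) * C (j + 1) * (u (j + 1 + 1) - u (j + 1))|
            + |(1 - θ) * D (j - 1) * (u j - u (j - 1))| := by
            calc _ ≤ |θ * Chat (j + 1) * (v (j + 1 + 1) - v (j + 1))
                + θ * Dhat (j - 1) * (v j - v (j - 1))
                + (1 - (1 - θ) * (C j + D j)) * (u (j + 1) - u j)
                + (1 - θ) * C (j + 1) * (u (j + 1 + 1) - u (j + 1))|
                + |(1 - θ) * D (j - 1) * (u j - u (j - 1))| := abs_add_le _ _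
              _ ≤ |θ * Chat (j + 1) * (v (j + 1 + 1) - v (j + 1))
                + θ * Dhat (j - 1) * (v j - v (j - 1))
                + (1 - (1 - θ) * (C j + D j)) * (u (j + 1) - u j)|
                + |(1 - θ) * C (j + 1) * (u (j + 1 + 1) - u (j + 1))|
                + |(1 - θ) * D (j - 1) * (u j - u (j - 1))| := by
                  gcongr; exact abs_add_le _ _
              _ ≤ |θ * Chat (j + 1) * (v (j + 1 + 1) - v (j + 1))
                + θ * Dhat (j - 1) * (v j - v (j - 1))|
                + |(1 - (1 - θ) * (C j + D j)) * (u (j + 1) - u j)|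
                + |(1 - θ) * C (j + 1) * (u (j + 1 + 1) - u (j + 1))|
                + |(1 - θ) * D (j - 1) * (u j - u (j - 1))| := by
                  gcongr; exact abs_add_le _ _
              _ ≤ _ := by gcongr; exact abs_add_le _ _
        _ = θ * Chat (j + 1) * b (j + 1) + θ * Dhat (j - 1) * |v j - v (j - 1)|
            + (1 - (1 - θ) * (C j + D j)) * a j
            + (1 - θ) * C (j + 1) * a (j + 1)
            + (1 - θ) * D (j - 1) * |u j - u (j - 1)| := by
            simp only [abs_mul, abs_of_nonneg c1, abs_of_nonneg c2, abs_of_nonneg c3,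
              abs_of_nonneg c4, abs_of_nonneg c5, ha_def, hb_def]
    have hbshift : |v j - v (j - 1)| = b (j - 1) := by
      simp only [hb_def, sub_add_cancel]
    have hashift : |u j - u (j - 1)| = a (j - 1) := by
      simp only [ha_def, sub_add_cancel]
    rw [hbshift, hashift] at habs
    nlinarith [habs]
  -- sum the inequality
  have hsf : Summable (fun j => b j + θ * Chat j * b j + θ * Dhat j * b j
      + (1 - θ) * (C j + D j) * a j) := ((hsb.add hsCb).add hsDb).add hsCDa
  have hsg : Summable (fun j => θ * Chat (j + 1) * b (j + 1) + θ * Dhat (j - 1) * b (j - 1)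
      + a j + (1 - θ) * C (j + 1) * a (j + 1) + (1 - θ) * D (j - 1) * a (j - 1)) :=
    (((hsCb'.add hsDb').add hsa).add hsCa').add hsDa'
  have hsum := Summable.tsum_le_tsum key hsf hsg
  -- expand both sides
  have eqf : ∑' j, (b j + θ * Chat j * b j + θ * Dhat j * b j + (1 - θ) * (C j + D j) * a j)
      = (∑' j, b j) + (∑' j, θ * Chat j * b j) + (∑' j, θ * Dhat j * b j)
        + ∑' j, (1 - θ) * (C j + D j) * a j := by
    rw [Summable.tsum_add ((hsb.add hsCb).add hsDb) hsCDa, Summable.tsum_add (hsb.add hsCb) hsDb,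
      Summable.tsum_add hsb hsCb]
  have eqg : ∑' j, (θ * Chat (j + 1) * b (j + 1) + θ * Dhat (j - 1) * b (j - 1)
        + a j + (1 - θ) * C (j + 1) * a (j + 1) + (1 - θ) * D (j - 1) * a (j - 1))
      = (∑' j, θ * Chat (j + 1) * b (j + 1)) + (∑' j, θ * Dhat (j - 1) * b (j - 1))
        + (∑' j, a j) + (∑' j, (1 - θ) * C (j + 1) * a (j + 1))
        + ∑' j, (1 - θ) * D (j - 1) * a (j - 1) := by
    rw [Summable.tsum_add (((hsCb'.add hsDb').add hsa).add hsCa') hsDa',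
      Summable.tsum_add ((hsCb'.add hsDb').add hsa) hsCa', Summable.tsum_add (hsCb'.add hsDb') hsa,
      Summable.tsum_add hsCb' hsDb']
  have sh1 : ∑' j, θ * Chat (j + 1) * b (j + 1) = ∑' j, θ * Chat j * b j := by
    simpa using (Equiv.addRight (1 : ℤ)).tsum_eq (fun j => θ * Chat j * b j)
  have sh2 : ∑' j, θ * Dhat (j - 1) * b (j - 1) = ∑' j, θ * Dhat j * b j := by
    simpa using (Equiv.subRight (1 : ℤ)).tsum_eq (fun j => θ * Dhat j * b j)
  have sh3 : ∑' j, (1 - θ) * C (j + 1) * a (j + 1) = ∑' j, (1 - θ) * C j * a j := by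
    simpa using (Equiv.addRight (1 : ℤ)).tsum_eq (fun j => (1 - θ) * C j * a j)
  have sh4 : ∑' j, (1 - θ) * D (j - 1) * a (j - 1) = ∑' j, (1 - θ) * D j * a j := by
    simpa using (Equiv.subRight (1 : ℤ)).tsum_eq (fun j => (1 - θ) * D j * a j)
  have split : ∑' j, (1 - θ) * (C j + D j) * a j
      = (∑' j, (1 - θ) * C j * a j) + ∑' j, (1 - θ) * D j * a j := by
    rw [← Summable.tsum_add hsCa hsDa]
    exact tsum_congr (fun j => by ring)
  have hfinal : ∑' j, b j ≤ ∑' j, a j := by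
    rw [eqf, eqg, sh1, sh2, sh3, sh4, split] at hsum
    linarith
  show (∑' j : ℤ, ENNReal.ofReal |v (j + 1) - v j|) ≤ ∑' j : ℤ, ENNReal.ofReal |u (j + 1) - u j|
  rw [show (fun j : ℤ => ENNReal.ofReal |v (j + 1) - v j|) = fun j => ENNReal.ofReal (b j) from rfl] at *
  rw [← ENNReal.ofReal_tsum_of_nonneg hb0 hsb, ← ENNReal.ofReal_tsum_of_nonneg ha0 hsa]
  exact ENNReal.ofReal_le_ofReal hfinal
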